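/- Let b > 1 and k ≥ 2. Let 𝕒 and 𝕓 be consecutive elements of 𝒟_A^{k−1} with 𝕒 <_lex 𝕓, and suppose 𝕒, 𝕓 ∈ E_{k−1,d}. Then 𝕓 has the form 𝕓 = b_1⋯b_{k'}00⋯0 (with k−k'−1 trailing zeros) for some k' < k−1 with b_{k'} ≠ 0, and 𝕒 = b_1⋯b_{k'−1}(b_{k'}−1)c_1⋯c_{k−k'−1}. Moreover, the longest suffix of 𝕒 that is a prefix of 𝕔 is c_1⋯c_{k−k'−1}, i.e. the suffix starting at position k'+1 of 𝕒. -/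

import Mathlib

/-- The beta transformation `T x = b x - ⌊b x⌋`. -/
noncomputable def bT (b : ℝ) (x : ℝ) : ℝ := b * x - ⌊b * x⌋

/-- `bdig b j x` is the `(j+1)`-th digit `d_{j+1}(x) = ⌊b · T^[j] x⌋` of the `b`-expansion. -/
noncomputable def bdig (b : ℝ) (j : ℕ) (x : ℝ) : ℤ := ⌊b * (bT b)^[j] x⌋

/-- A block `a_0 ⋯ a_{n-1}` (0-indexed) is admissible if it consists of the
first `n` digits of the `b`-expansion of some `x ∈ [0,1)`. -/
def bAdm (b : ℝ) (n : ℕ) (a : ℕ → ℤ) : Prop :=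
  ∃ x ∈ Set.Ico (0 : ℝ) 1, ∀ j < n, a j = bdig b j x

/-- The value `𝕒(b) = Σ_{k=1}^n a_k b^{-k}` of a block. -/
noncomputable def blockVal (b : ℝ) (n : ℕ) (a : ℕ → ℤ) : ℝ :=
  ∑ j ∈ Finset.range n, (a j : ℝ) * b ^ (-((j : ℤ) + 1))

section Aux

variable {b : ℝ}

theorem iter_mem (hb : 1 < b) {x : ℝ} (hx : x ∈ Set.Ico (0:ℝ) 1) (j : ℕ) :
    (bT b)^[j] x ∈ Set.Ico (0:ℝ) 1 := by
  induction j with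
  | zero => exact hx
  | succ j ih =>
    rw [Function.iterate_succ_apply']
    have : bT b ((bT b)^[j] x) = Int.fract (b * (bT b)^[j] x) := rfl
    rw [this]
    exact ⟨Int.fract_nonneg _, Int.fract_lt_one _⟩

theorem bdig_nonneg (hb : 1 < b) {x : ℝ} (hx : x ∈ Set.Ico (0:ℝ) 1) (j : ℕ) :
    0 ≤ bdig b j x := by
  have h := iter_mem hb hx j
  have : (0:ℝ) ≤ b * (bT b)^[j] x := mul_nonneg (by linarith) h.1
  exact Int.floor_nonneg.2 this

theorem bdig_shift (i m : ℕ) (x : ℝ) : bdig b (i + m) x = bdig b m ((bT b)^[i] x) := by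
  unfold bdig
  rw [add_comm i m, Function.iterate_add_apply]

/-- Fundamental identity for truncated sums of digits. -/
theorem blockVal_digits (hb : 1 < b) (x : ℝ) (L : ℕ) :
    blockVal b L (fun m => bdig b m x) = x - b ^ (-(L:ℤ)) * (bT b)^[L] x := by
  have hbne : b ≠ 0 := by positivity
  induction L with
  | zero => simp [blockVal]
  | succ L ih =>
    rw [blockVal, Finset.sum_range_succ, ← blockVal, ih]
    have hT : (bT b)^[L+1] x = b * (bT b)^[L] x - (bdig b L x : ℝ) := by
      rw [Function.iterate_succ_apply']
      rfl
    rw [hT]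
    have e1 : b ^ (-((L:ℕ)+1:ℤ)) * b = b ^ (-(L:ℤ)) := by
      rw [← zpow_add_one₀ hbne]; ring_nf
    have e2 : (-(((L+1):ℕ):ℤ)) = (-((L:ℕ)+1:ℤ)) := by push_cast; ring
    rw [e2]
    linear_combination ((bT b)^[L] x) * e1

end Aux

section Aux2

variable {b : ℝ}

/-- Value of a shifted digit block. -/
theorem blockVal_shift (hb : 1 < b) {x : ℝ} (hx : x ∈ Set.Ico (0:ℝ) 1)
    {n : ℕ} {w : ℕ → ℤ} (hw : ∀ j < n, w j = bdig b j x) {i : ℕ} (hi : i ≤ n) :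
    blockVal b (n - i) (fun m => w (i + m))
      = (bT b)^[i] x - b ^ (-((n - i : ℕ):ℤ)) * (bT b)^[n] x := by
  have h1 : blockVal b (n - i) (fun m => w (i + m))
      = blockVal b (n - i) (fun m => bdig b m ((bT b)^[i] x)) := by
    unfold blockVal
    apply Finset.sum_congr rfl
    intro m hm
    have hm' := Finset.mem_range.1 hm
    simp only []
    rw [hw (i + m) (by omega), bdig_shift]
  rw [h1, blockVal_digits hb]
  have : (bT b)^[n-i] ((bT b)^[i] x) = (bT b)^[n] x := by
    rw [← Function.iterate_add_apply]
    congr 1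
    omega
  rw [this]

theorem blockVal_shift_lt_one (hb : 1 < b) {x : ℝ} (hx : x ∈ Set.Ico (0:ℝ) 1)
    {n : ℕ} {w : ℕ → ℤ} (hw : ∀ j < n, w j = bdig b j x) {i : ℕ} (hi : i ≤ n) :
    blockVal b (n - i) (fun m => w (i + m)) < 1 := by
  rw [blockVal_shift hb hx hw hi]
  have h1 := iter_mem hb hx i
  have h2 := iter_mem hb hx n
  have h3 : 0 < b ^ (-((n - i : ℕ):ℤ)) := zpow_pos (by linarith) _
  nlinarith [h1.2, h2.1]

theorem blockVal_shift_gt (hb : 1 < b) {x : ℝ} (hx : x ∈ Set.Ico (0:ℝ) 1)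
    {n : ℕ} {w : ℕ → ℤ} (hw : ∀ j < n, w j = bdig b j x) {i : ℕ} (hi : i ≤ n) :
    (bT b)^[i] x - b ^ (-((n - i : ℕ):ℤ)) < blockVal b (n - i) (fun m => w (i + m)) := by
  rw [blockVal_shift hb hx hw hi]
  have h2 := iter_mem hb hx n
  have h3 : 0 < b ^ (-((n - i : ℕ):ℤ)) := zpow_pos (by linarith) _
  nlinarith [h2.2]

/-- Sums which differ in a single term. -/
theorem sum_single_diff {L m0 : ℕ} (hm0 : m0 < L) (F G : ℕ → ℝ)
    (h : ∀ m < L, m ≠ m0 → F m = G m) :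
    ∑ m ∈ Finset.range L, F m = (∑ m ∈ Finset.range L, G m) + (F m0 - G m0) := by
  have key : ∑ m ∈ Finset.range L, (F m - G m) = F m0 - G m0 := by
    apply Finset.sum_eq_single_of_mem m0 (Finset.mem_range.2 hm0)
    intro m hm hne
    rw [h m (Finset.mem_range.1 hm) hne]
    ring
  rw [← key, ← Finset.sum_add_distrib]
  apply Finset.sum_congr rfl
  intros
  ring

/-- Construction of an admissible block from digit bounds. -/
theorem adm_intro (hb : 1 < b) (n : ℕ) (w : ℕ → ℤ) (h0 : ∀ j < n, 0 ≤ w j)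
    (h1 : ∀ i < n, blockVal b (n - i) (fun m => w (i + m)) < 1) : bAdm b n w := by
  have hb0 : (0:ℝ) < b := by linarith
  have hbne : b ≠ 0 := ne_of_gt hb0
  set z : ℕ → ℝ := fun i => blockVal b (n - i) (fun m => w (i + m)) with hz
  have hz_nonneg : ∀ i, 0 ≤ z i := by
    intro i
    apply Finset.sum_nonneg
    intro m hm
    have : 0 ≤ w (i + m) := h0 _ (by have := Finset.mem_range.1 hm; omega)
    have hp : (0:ℝ) < b ^ (-((m:ℤ)+1)) := zpow_pos hb0 _
    exact mul_nonneg (by exact_mod_cast this) hp.le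
  have hz_lt : ∀ i ≤ n, z i < 1 := by
    intro i hi
    rcases eq_or_lt_of_le hi with h | h
    · have : n - i = 0 := by omega
      simp [hz, blockVal, this]
    · exact h1 i h
  have hrec : ∀ i < n, b * z i = (w i : ℝ) + z (i + 1) := by
    intro i hi
    have hni : n - i = (n - (i+1)) + 1 := by omega
    have expand : z i = (∑ m ∈ Finset.range (n - (i+1)), (w (i + (m+1)) : ℝ) * b ^ (-((m:ℤ)+1)-1))
        + (w (i + 0) : ℝ) * b ^ (-(0:ℤ)-1) := by
      rw [hz]
      simp only [blockVal, hni]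
      rw [Finset.sum_range_succ']
      congr 1
    rw [expand]
    rw [mul_add, Finset.mul_sum]
    have term : ∀ m : ℕ, b * ((w (i + (m+1)) : ℝ) * b ^ (-((m:ℤ)+1)-1))
        = (w (i + 1 + m) : ℝ) * b ^ (-((m:ℤ)+1)) := by
      intro m
      have : (i + (m+1)) = (i + 1 + m) := by omega
      rw [this]
      rw [show (-((m:ℤ)+1) : ℤ) = (-((m:ℤ)+1)-1) + 1 by ring, zpow_add_one₀ hbne]
      ring
    rw [Finset.sum_congr rfl (fun m _ => term m)]
    have last : b * ((w (i + 0) : ℝ) * b ^ (-(0:ℤ)-1)) = (w i : ℝ) := by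
      have : b ^ (-(0:ℤ)-1) = b⁻¹ := by
        rw [show (-(0:ℤ)-1 : ℤ) = -1 by ring, zpow_neg, zpow_one]
      rw [this]
      field_simp
      simp
    rw [last, hz]
    simp only [blockVal]
    ring
  have hfloor : ∀ i < n, (⌊b * z i⌋ : ℤ) = w i ∧ bT b (z i) = z (i+1) := by
    intro i hi
    have h1' : b * z i = (w i : ℝ) + z (i+1) := hrec i hi
    have hz1 : 0 ≤ z (i+1) := hz_nonneg _
    have hz2 : z (i+1) < 1 := hz_lt _ (by omega)
    have hfl : (⌊b * z i⌋ : ℤ) = w i := by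
      rw [h1', Int.floor_intCast_add]
      have : ⌊z (i+1)⌋ = 0 := Int.floor_eq_zero_iff.mpr ⟨hz1, hz2⟩
      omega
    refine ⟨hfl, ?_⟩
    show b * z i - (⌊b * z i⌋ : ℤ) = z (i+1)
    rw [hfl, h1']
    ring
  have hiter : ∀ i ≤ n, (bT b)^[i] (z 0) = z i := by
    intro i hi
    induction i with
    | zero => rfl
    | succ i ih =>
      rw [Function.iterate_succ_apply', ih (by omega)]
      exact (hfloor i (by omega)).2
  refine ⟨z 0, ⟨hz_nonneg 0, hz_lt 0 (by omega)⟩, ?_⟩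
  intro j hj
  unfold bdig
  rw [hiter j (by omega)]
  exact ((hfloor j hj).1).symm

end Aux2

section Aux3

variable {b : ℝ}

/-- Monotonicity of digits. -/
theorem dig_mono (hb : 1 < b) {x y : ℝ} (hx : x ∈ Set.Ico (0:ℝ) 1) (hy : y ∈ Set.Ico (0:ℝ) 1)
    (hxy : x ≤ y) (i : ℕ) (hagree : ∀ j < i, bdig b j x = bdig b j y) :
    bdig b i x ≤ bdig b i y := by
  by_contra hgt
  push_neg at hgt
  have hb0 : (0:ℝ) < b := by linarith
  have hpow : (0:ℝ) < b ^ (-((i:ℕ)+1:ℤ)) := zpow_pos hb0 _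
  have hTx := (iter_mem hb hx (i+1))
  have hTy := (iter_mem hb hy (i+1))
  have hx' := blockVal_digits hb x (i+1)
  have hy' := blockVal_digits hb y (i+1)
  have hdiff : blockVal b (i+1) (fun m => bdig b m x)
      = blockVal b (i+1) (fun m => bdig b m y)
        + ((bdig b i x : ℝ) * b ^ (-((i:ℤ)+1)) - (bdig b i y : ℝ) * b ^ (-((i:ℤ)+1))) := by
    apply sum_single_diff (by omega)
    intro m hm hne
    simp only []
    rw [hagree m (by omega)]
  have hge : (bdig b i y : ℝ) + 1 ≤ (bdig b i x : ℝ) := by exact_mod_cast hgt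
  have e2 : (-(((i+1):ℕ)):ℤ) = (-((i:ℤ)+1)) := by push_cast; ring
  rw [e2] at hx' hy'
  nlinarith [hTx.1, hTy.2, hpow]

end Aux3

section Aux4

variable {b : ℝ} {c : ℕ → ℤ}

/-- Realizing the sequence `c` by points `1 - ε`. -/
theorem c_eps (hc : ∀ j, ∀ᶠ ε in nhdsWithin (0 : ℝ) (Set.Ioi 0), bdig b j (1 - ε) = c j)
    (L : ℕ) {δ : ℝ} (hδ : 0 < δ) :
    ∃ ε : ℝ, 0 < ε ∧ ε < δ ∧ ∀ j < L, bdig b j (1 - ε) = c j := by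
  have h1 : ∀ᶠ ε in nhdsWithin (0:ℝ) (Set.Ioi 0), ∀ j ∈ Finset.range L, bdig b j (1-ε) = c j :=
    (Filter.eventually_all_finset _).2 (fun j _ => hc j)
  have h2 : ∀ᶠ ε in nhdsWithin (0:ℝ) (Set.Ioi 0), ε < δ :=
    (gt_mem_nhds hδ).filter_mono nhdsWithin_le_nhds
  have h3 : ∀ᶠ ε in nhdsWithin (0:ℝ) (Set.Ioi 0), 0 < ε := eventually_mem_nhdsWithin
  obtain ⟨ε, hε1, hε2, hε3⟩ := (h1.and (h2.and h3)).exists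
  exact ⟨ε, hε3, hε2, fun j hj => hε1 j (Finset.mem_range.2 hj)⟩

theorem c_nonneg (hb : 1 < b)
    (hc : ∀ j, ∀ᶠ ε in nhdsWithin (0 : ℝ) (Set.Ioi 0), bdig b j (1 - ε) = c j) (j : ℕ) :
    0 ≤ c j := by
  obtain ⟨ε, hε0, hε1, hεd⟩ := c_eps hc (j+1) (one_pos)
  rw [← hεd j (by omega)]
  exact bdig_nonneg hb ⟨by linarith, by linarith⟩ j

/-- The prefix of `c` has value at least `1 - b^{-r}`. -/
theorem blockVal_nonneg (hb : 1 < b) {w : ℕ → ℤ} (L : ℕ) (hw : ∀ m < L, 0 ≤ w m) :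
    0 ≤ blockVal b L w := by
  apply Finset.sum_nonneg
  intro m hm
  have := hw m (Finset.mem_range.1 hm)
  have hp : (0:ℝ) < b ^ (-((m:ℤ)+1)) := zpow_pos (by linarith) _
  exact mul_nonneg (by exact_mod_cast this) hp.le

theorem c_prefix_ge (hb : 1 < b)
    (hc : ∀ j, ∀ᶠ ε in nhdsWithin (0 : ℝ) (Set.Ioi 0), bdig b j (1 - ε) = c j) (r : ℕ) :
    1 - b ^ (-(r:ℤ)) ≤ blockVal b r c := by
  by_contra hlt
  push_neg at hlt
  have hCnn : 0 ≤ blockVal b r c := blockVal_nonneg hb r (fun m _ => c_nonneg hb hc m)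
  have hpow : (0:ℝ) < b ^ (-(r:ℤ)) := zpow_pos (by linarith) _
  have hδ : 0 < 1 - b ^ (-(r:ℤ)) - blockVal b r c := by linarith
  obtain ⟨ε, hε0, hε1, hεd⟩ := c_eps hc r hδ
  have hmem : (1 - ε) ∈ Set.Ico (0:ℝ) 1 := ⟨by linarith, by linarith⟩
  have hgt := blockVal_shift_gt hb hmem (n := r) (w := c)
    (fun j hj => (hεd j hj).symm) (i := 0) (by omega)
  simp only [Function.iterate_zero_apply, Nat.sub_zero, Nat.zero_add] at hgt
  have heq : (blockVal b r fun m => c m) = blockVal b r c := rfl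
  rw [heq] at hgt
  linarith

theorem c_block_lt_one (hb : 1 < b)
    (hc : ∀ j, ∀ᶠ ε in nhdsWithin (0 : ℝ) (Set.Ioi 0), bdig b j (1 - ε) = c j) (i L : ℕ) :
    blockVal b L (fun m => c (i + m)) < 1 := by
  obtain ⟨ε, hε0, hε1, hεd⟩ := c_eps hc (i + L) one_pos
  have hmem : (1 - ε) ∈ Set.Ico (0:ℝ) 1 := ⟨by linarith, by linarith⟩
  have := blockVal_shift_lt_one hb hmem (n := i + L) (w := c)
    (fun j hj => (hεd j hj).symm) (i := i) (by omega)
  have hIL : i + L - i = L := by omega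
  rwa [hIL] at this

end Aux4

section Aux5

variable {b : ℝ} {c : ℕ → ℤ}

theorem geom_blockVal (hb : 1 < b) (L : ℕ) :
    (b - 1) * blockVal b L (fun _ => (1:ℤ)) = 1 - (b ^ L)⁻¹ := by
  have hbne : b ≠ 0 := by positivity
  induction L with
  | zero => simp [blockVal]
  | succ L ih =>
    rw [blockVal, Finset.sum_range_succ, ← blockVal]
    have e2 : b ^ (-((L:ℤ)+1)) = (b ^ (L+1))⁻¹ := by
      rw [show (-((L:ℤ)+1)) = -(((L+1:ℕ)):ℤ) by push_cast; ring, zpow_neg, zpow_natCast]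
    rw [e2, pow_succ]
    have hbp : (0:ℝ) < b ^ L := by positivity
    field_simp
    field_simp at ih
    push_cast
    linear_combination b * ih

theorem d_add_one_le_b (hb : 1 < b)
    (hc : ∀ j, ∀ᶠ ε in nhdsWithin (0 : ℝ) (Set.Ioi 0), bdig b j (1 - ε) = c j)
    {d' : ℤ} (hd' : IsLeast {z : ℤ | ∃ j, c j = z} d') {d : ℤ} (hdd' : d ≤ d') :
    (d : ℝ) + 1 ≤ b := by
  by_contra h
  push_neg at h
  have hdR : b - 1 < (d:ℝ) := by linarith
  have hd0R : (0:ℝ) < (d:ℝ) := by linarith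
  have hdc : ∀ m, (d:ℝ) ≤ (c m : ℝ) := by
    intro m
    have : d' ≤ c m := hd'.2 ⟨m, rfl⟩
    exact_mod_cast le_trans hdd' this
  have key : ∀ L : ℕ, (d:ℝ) * (1 - (b ^ L)⁻¹) < b - 1 := by
    intro L
    have h1 : (d:ℝ) * blockVal b L (fun _ => (1:ℤ)) ≤ blockVal b L c := by
      rw [blockVal, blockVal, Finset.mul_sum]
      apply Finset.sum_le_sum
      intro m hm
      have hp : (0:ℝ) < b ^ (-((m:ℤ)+1)) := zpow_pos (by linarith) _
      push_cast
      nlinarith [hdc m, hp]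
    have h2 : blockVal b L c < 1 := by
      have := c_block_lt_one hb hc 0 L
      have heq : (fun m => c (0 + m)) = c := by funext m; rw [Nat.zero_add]
      rwa [heq] at this
    have h3 := geom_blockVal hb L
    nlinarith [h1, h2, h3]
  obtain ⟨L, hL⟩ := pow_unbounded_of_one_lt ((d:ℝ) / ((d:ℝ) - (b-1))) hb
  have hpos : (0:ℝ) < (d:ℝ) - (b-1) := by linarith
  have hbL : (0:ℝ) < b ^ L := by positivity
  have : (d:ℝ) < ((d:ℝ) - (b - 1)) * b ^ L := by
    rw [div_lt_iff₀ hpos] at hL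
    linarith
  have h5 : (d:ℝ) * (b ^ L)⁻¹ < (d:ℝ) - (b-1) := by
    rw [← div_lt_iff₀ hbL] at this
    rw [div_eq_mul_inv] at this
    linarith [this]
  have := key L
  nlinarith [h5, key L, hbL]

end Aux5

/-- Splitting a block value. -/
theorem blockVal_split {b : ℝ} (hbne : b ≠ 0) (w : ℕ → ℤ) (A q : ℕ) :
    blockVal b (A + q) w = (∑ m ∈ Finset.range A, (w m : ℝ) * b ^ (-((m:ℤ)+1)))
      + b ^ (-(A:ℤ)) * blockVal b q (fun m => w (A + m)) := by
  rw [blockVal, Finset.sum_range_add, blockVal, Finset.mul_sum]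
  congr 1
  apply Finset.sum_congr rfl
  intro m hm
  have h3 : b ^ (-(((A+m:ℕ)):ℤ)+(-1)) = b ^ (-(A:ℤ)) * b ^ (-((m:ℤ)+1)) := by
    rw [← zpow_add₀ hbne]
    congr 1
    push_cast
    ring
  rw [show (-(((((A+m):ℕ)):ℤ)+1)) = (-(((A+m):ℕ):ℤ)+(-1)) by ring, h3]
  ring


/-- `a ∈ E_{k-1,d}`: `a` is an admissible `(k-1)`-block and for some `j < k`
(1-indexed), the value of the block `a_j ⋯ a_{k-1} (d+1)` exceeds 1.
Here `a` is 0-indexed, so the suffix starts at a 0-indexed position `j < k-1`. -/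
def memE (b : ℝ) (k : ℕ) (d : ℤ) (a : ℕ → ℤ) : Prop :=
  bAdm b (k - 1) a ∧ ∃ j < k - 1,
    1 < (∑ m ∈ Finset.range (k - 1 - j), (a (j + m) : ℝ) * b ^ (-((m : ℤ) + 1)))
        + (d + 1 : ℝ) * b ^ (-((k - 1 - j : ℕ) : ℤ) - 1)

/-- Lexicographic order on blocks of length `n`. -/
def lexLt (n : ℕ) (a c : ℕ → ℤ) : Prop :=
  ∃ m < n, (∀ j < m, a j = c j) ∧ a m < c m

/-- Two admissible `n`-blocks are consecutive (with `a <_lex c`) if no admissible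
`n`-block lies strictly between them. -/
def bConsecutive (b : ℝ) (n : ℕ) (a c : ℕ → ℤ) : Prop :=
  bAdm b n a ∧ bAdm b n c ∧ lexLt n a c ∧
    ¬ ∃ e : ℕ → ℤ, bAdm b n e ∧ lexLt n a e ∧ lexLt n e c

/-- Let `𝕒 <_lex 𝕓` be consecutive admissible `(k-1)`-blocks, both in `E_{k-1,d}`.
Then (writing `p` for the 0-indexed position of the 1-indexed `k'`, so `k' = p+1`)
`𝕓 = b_1⋯b_{k'}0⋯0` with `k' < k-1` and `b_{k'} ≠ 0`,
`𝕒 = b_1⋯b_{k'-1}(b_{k'}-1)c_1⋯c_{k-k'-1}`, and moreover the longest suffix of `𝕒`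
that is a prefix of `𝕔` is exactly the one starting at position `k'+1`. -/
theorem stmt3 (b : ℝ) (hb : 1 < b) (k : ℕ) (hk : 2 ≤ k)
    (c : ℕ → ℤ)
    (hc : ∀ j, ∀ᶠ ε in nhdsWithin (0 : ℝ) (Set.Ioi 0), bdig b j (1 - ε) = c j)
    (d' : ℤ) (hd' : IsLeast {z : ℤ | ∃ j, c j = z} d')
    (d : ℤ) (hd0 : 0 ≤ d) (hdd' : d ≤ d')
    (a bb : ℕ → ℤ) (hcons : bConsecutive b (k - 1) a bb)
    (haE : memE b k d a) (hbE : memE b k d bb) :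
    ∃ p : ℕ, p + 1 < k - 1 ∧ bb p ≠ 0 ∧
      (∀ j, p < j → j < k - 1 → bb j = 0) ∧
      (∀ j < p, a j = bb j) ∧ a p = bb p - 1 ∧
      (∀ m, p + 1 + m < k - 1 → a (p + 1 + m) = c m) ∧
      (∀ ℓ ≤ p, ¬ ∀ m, ℓ + m < k - 1 → a (ℓ + m) = c m) := by
  classical
  have hb0 : (0:ℝ) < b := by linarith
  have hbne : b ≠ 0 := ne_of_gt hb0
  set n := k - 1 with hndef
  have hn1 : 1 ≤ n := by omega
  obtain ⟨hAa, hAbb, hlex, hnob⟩ := hcons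
  obtain ⟨x, hx, hxd⟩ := hAa
  obtain ⟨y, hy, hyd⟩ := hAbb
  obtain ⟨p, hpn, hpagree, hplt⟩ := hlex
  have ha_nn : ∀ j, j < n → 0 ≤ a j := fun j hj => (hxd j hj) ▸ bdig_nonneg hb hx j
  have hbb_nn : ∀ j, j < n → 0 ≤ bb j := fun j hj => (hyd j hj) ▸ bdig_nonneg hb hy j
  have hSb : ∀ i, i < n → blockVal b (n - i) (fun m => bb (i + m)) < 1 :=
    fun i hi => blockVal_shift_lt_one hb hy hyd (le_of_lt hi)
  have hd1b : (d : ℝ) + 1 ≤ b := d_add_one_le_b hb hc hd' hdd'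
  -- the in-between block
  set B' : ℕ → ℤ := fun i => if i < p then a i else if i = p then a p + 1 else 0 with hB'
  have hB'adm : bAdm b n B' := by
    apply adm_intro hb
    · intro j hj
      by_cases h1 : j < p
      · simpa [hB', h1] using ha_nn j (by omega)
      · by_cases h2 : j = p
        · have := ha_nn p (by omega)
          simp [hB', h1, h2]
          omega
        · simp [hB', h1, h2]
    · intro i hi
      have hle : blockVal b (n-i) (fun m => B' (i+m)) ≤ blockVal b (n-i) (fun m => bb (i+m)) := by
        apply Finset.sum_le_sum
        intro m hm
        have hm' := Finset.mem_range.1 hm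
        have hpw : (0:ℝ) < b ^ (-((m:ℤ)+1)) := zpow_pos hb0 _
        have hle2 : B' (i+m) ≤ bb (i+m) := by
          by_cases h1 : i+m < p
          · simp [hB', h1, hpagree _ h1]
          · by_cases h2 : i+m = p
            · simp [hB', h1, h2]
              omega
            · simp [hB', h1, h2]
              exact hbb_nn _ (by omega)
        simp only []
        have : ((B' (i+m)):ℝ) ≤ ((bb (i+m)):ℝ) := by exact_mod_cast hle2
        nlinarith
      exact lt_of_le_of_lt hle (hSb i hi)
  have hBa : lexLt n a B' := by
    refine ⟨p, hpn, fun j hj => by simp [hB', hj], by simp [hB']⟩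
  have hbbp : bb p = a p + 1 := by
    by_contra hne
    have hlt2 : a p + 1 < bb p := by omega
    exact hnob ⟨B', hB'adm, hBa,
      ⟨p, hpn, fun j hj => by simp [hB', hj, hpagree j hj], by simp [hB']; omega⟩⟩
  have hzero : ∀ j, p < j → j < n → bb j = 0 := by
    by_contra hcon
    push_neg at hcon
    obtain ⟨j0, hj0p, hj0n, hj0ne⟩ := hcon
    have hex : ∃ j, p < j ∧ j < n ∧ bb j ≠ 0 := ⟨j0, hj0p, hj0n, hj0ne⟩
    obtain ⟨hj1p, hj1n, hj1ne⟩ := Nat.find_spec hex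
    apply hnob
    refine ⟨B', hB'adm, hBa, ⟨Nat.find hex, hj1n, ?_, ?_⟩⟩
    · intro j hj
      by_cases h1 : j < p
      · simp [hB', h1, hpagree j h1]
      · by_cases h2 : j = p
        · subst h2
          simp [hB', h1]
          omega
        · have hmin := Nat.find_min hex hj
          have hbbj : bb j = 0 := by
            by_contra hne2
            exact hmin ⟨by omega, by omega, hne2⟩
          simp [hB', h1, h2, hbbj]
    · have h1 : ¬ Nat.find hex < p := by omega
      have h2 : Nat.find hex ≠ p := by omega
      simp [hB', h1, h2]
      have := hbb_nn _ hj1n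
      omega
  have hap : a p = bb p - 1 := by omega
  have hbbp_ne : bb p ≠ 0 := by
    have := ha_nn p (by omega)
    omega
  have hpn2 : p + 1 < n := by
    by_contra hcon
    have hpE : p = n - 1 := by omega
    obtain ⟨-, j, hjn, hjgt⟩ := haE
    have hjn' : j < n := hjn
    have hL1 : 1 ≤ n - j := by omega
    have hsum : (∑ m ∈ Finset.range (n-j), ((a (j+m)):ℝ) * b ^ (-((m:ℤ)+1)))
        = (∑ m ∈ Finset.range (n-j), ((bb (j+m)):ℝ) * b ^ (-((m:ℤ)+1)))
          + (- b ^ (-((n-j:ℕ):ℤ))) := by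
      have hm0 : n - 1 - j < n - j := by omega
      rw [sum_single_diff hm0 (fun m => ((a (j+m)):ℝ) * b ^ (-((m:ℤ)+1)))
        (fun m => ((bb (j+m)):ℝ) * b ^ (-((m:ℤ)+1))) ?_]
      · have hj1 : j + (n-1-j) = p := by omega
        have hpe : b ^ (-((((n-1-j):ℕ):ℤ) + 1)) = b ^ (-((n-j:ℕ):ℤ)) := by
          congr 1
          omega
        simp only [hj1]
        rw [hap]
        push_cast
        rw [hpe]
        ring
      · intro m hm hne
        have hjm : j + m < p := by omega
        simp only [hpagree _ hjm]
    rw [hsum] at hjgt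
    have hq : (0:ℝ) < b ^ (-((n-j:ℕ):ℤ)-1) := zpow_pos hb0 _
    have hqq : b * b ^ (-((n-j:ℕ):ℤ)-1) = b ^ (-((n-j:ℕ):ℤ)) := by
      rw [mul_comm, ← zpow_add_one₀ hbne]
      congr 1
      ring
    have hdq : ((d:ℝ)+1) * b ^ (-((n-j:ℕ):ℤ)-1) ≤ b ^ (-((n-j:ℕ):ℤ)) := by
      rw [← hqq]
      nlinarith
    have hfin := hSb j hjn'
    have : blockVal b (n-j) (fun m => bb (j+m))
        = ∑ m ∈ Finset.range (n-j), ((bb (j+m)):ℝ) * b ^ (-((m:ℤ)+1)) := rfl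
    nlinarith [hfin, hjgt, hdq]
  have hq1 : 1 ≤ n - p - 1 := by omega
  have hCq : blockVal b (n-p-1) c < 1 := by
    have := c_block_lt_one hb hc 0 (n-p-1)
    have heq : (fun m => c (0 + m)) = c := by
      funext m
      rw [Nat.zero_add]
    rwa [heq] at this
  have hsuffix : ∀ m, p + 1 + m < n → a (p+1+m) = c m := by
    by_contra hcon
    push_neg at hcon
    have hex : ∃ m, p+1+m < n ∧ a (p+1+m) ≠ c m := hcon
    obtain ⟨hm0n, hm0ne⟩ := Nat.find_spec hex
    set m0 := Nat.find hex with hm0def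
    have hmin : ∀ m, m < m0 → p+1+m < n → a (p+1+m) = c m := by
      intro m hm hmn
      have := Nat.find_min hex hm
      tauto
    rcases lt_or_gt_of_ne hm0ne with hlt | hgt
    · -- a (p+1+m0) < c m0 : build the in-between block ee
      set ee : ℕ → ℤ := fun i => if i ≤ p then a i else c (i - (p+1)) with heedef
      have headm : bAdm b n ee := by
        apply adm_intro hb
        · intro i hi
          by_cases h1 : i ≤ p
          · simpa [heedef, h1] using ha_nn i hi
          · simpa [heedef, h1] using c_nonneg hb hc (i - (p+1))
        · intro i hi
          by_cases hip : p < i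
          · have heq2 : blockVal b (n-i) (fun m => ee (i+m))
                = blockVal b (n-i) (fun m => c ((i - (p+1)) + m)) := by
              apply Finset.sum_congr rfl
              intro m hm
              have h1 : ¬ i + m ≤ p := by omega
              have h2 : i + m - (p+1) = (i - (p+1)) + m := by omega
              simp [heedef, h1, h2]
            rw [heq2]
            exact c_block_lt_one hb hc _ _
          · push_neg at hip
            set A := p + 1 - i with hAdef
            set q := n - p - 1 with hqdef
            have hsplit : n - i = A + q := by omega
            have hinner : blockVal b q (fun m => ee (i+(A+m))) = blockVal b q c := by
              apply Finset.sum_congr rfl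
              intro m hm
              have h1 : ¬ i + (A + m) ≤ p := by omega
              have h2 : i + (A + m) - (p+1) = m := by omega
              simp only [heedef, if_neg h1, h2]
            have hsum2 : blockVal b (n-i) (fun m => ee (i+m))
                = (∑ m ∈ Finset.range A, ((ee (i+m)):ℝ) * b ^ (-((m:ℤ)+1)))
                  + b ^ (-(A:ℤ)) * blockVal b q c := by
              rw [show blockVal b (n-i) (fun m => ee (i+m)) = blockVal b (A+q) (fun m => ee (i+m)) by rw [hsplit],
                blockVal_split hbne, ← hinner]
            have hsum3 : (∑ m ∈ Finset.range A, ((ee (i+m)):ℝ) * b ^ (-((m:ℤ)+1)))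
                = (∑ m ∈ Finset.range A, ((bb (i+m)):ℝ) * b ^ (-((m:ℤ)+1))) - b ^ (-(A:ℤ)) := by
              rw [sum_single_diff (show p - i < A by omega)
                (fun m => ((ee (i+m)):ℝ) * b ^ (-((m:ℤ)+1)))
                (fun m => ((bb (i+m)):ℝ) * b ^ (-((m:ℤ)+1))) ?_]
              · have hpi : i + (p - i) = p := by omega
                have hpe : b ^ (-((((p-i):ℕ):ℤ) + 1)) = b ^ (-(A:ℤ)) := by
                  congr 1
                  omega
                simp only [hpi]
                have h1 : p ≤ p := le_refl p
                simp only [heedef, if_pos h1]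
                rw [hap]
                push_cast
                rw [hpe]
                ring
              · intro m hm hne
                have h1 : i + m ≤ p := by omega
                have h2 : i + m < p := by omega
                simp only [heedef, if_pos h1, hpagree _ h2]
            have hsum4 : (∑ m ∈ Finset.range A, ((bb (i+m)):ℝ) * b ^ (-((m:ℤ)+1)))
                = blockVal b (n-i) (fun m => bb (i+m)) := by
              have hz2 : blockVal b q (fun m => bb (i+(A+m))) = 0 := by
                apply Finset.sum_eq_zero
                intro m hm
                have hm' := Finset.mem_range.1 hm
                have : bb (i+(A+m)) = 0 := hzero _ (by omega) (by omega)
                simp [this]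
              rw [show blockVal b (n-i) (fun m => bb (i+m)) = blockVal b (A+q) (fun m => bb (i+m)) by rw [hsplit],
                blockVal_split hbne, hz2]
              simp
            have hA0 : (0:ℝ) < b ^ (-(A:ℤ)) := zpow_pos hb0 _
            have := hSb i (by omega)
            rw [hsum2, hsum3, hsum4]
            nlinarith [hCq]
      apply hnob
      refine ⟨ee, headm, ⟨p+1+m0, hm0n, ?_, ?_⟩, ⟨p, hpn, ?_, ?_⟩⟩
      · intro j hj
        by_cases h1 : j ≤ p
        · simp [heedef, h1]
        · push_neg at h1
          have h2 : ¬ j ≤ p := by omega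
          have h3 : p + 1 + (j - (p+1)) = j := by omega
          have h4 : j - (p+1) < m0 := by omega
          simp only [heedef, if_neg h2]
          have h5 := hmin (j - (p+1)) h4 (by omega)
          rw [h3] at h5
          exact h5
      · have h1 : ¬ p + 1 + m0 ≤ p := by omega
        have h2 : p + 1 + m0 - (p+1) = m0 := by omega
        simp only [heedef, if_neg h1, h2]
        exact hlt
      · intro j hj
        simp [heedef, le_of_lt hj, hpagree j hj]
      · simp [heedef]
        exact hplt
    · -- a (p+1+m0) > c m0 : contradict monotonicity of digits
      have hz := iter_mem hb hx (p+1)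
      set z := (bT b)^[p+1] x with hzdef
      have hδ : (0:ℝ) < 1 - z := by linarith [hz.2]
      obtain ⟨ε, hε0, hε1, hεd⟩ := c_eps hc n hδ
      have hyε : (1-ε) ∈ Set.Ico (0:ℝ) 1 := ⟨by linarith [hz.1], by linarith⟩
      have hzle : z ≤ 1 - ε := by linarith
      have hmono := dig_mono hb hz hyε hzle m0 (fun j hj => by
        rw [hzdef, ← bdig_shift, ← hxd _ (by omega), hεd j (by omega)]
        exact hmin j hj (by omega))
      rw [hzdef, ← bdig_shift, ← hxd _ hm0n, hεd m0 (by omega)] at hmono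
      omega
  have hmax : ∀ ℓ, ℓ ≤ p → ¬ ∀ m, ℓ + m < n → a (ℓ + m) = c m := by
    intro ℓ hℓ hall
    have hℓn : ℓ < n := by omega
    have hsplit : n - ℓ = (p - ℓ + 1) + (n - p - 1) := by omega
    set r := p - ℓ + 1 with hrdef
    set q2 := n - p - 1 with hq2def
    have h1 : blockVal b (n-ℓ) (fun m => bb (ℓ+m))
        = ∑ m ∈ Finset.range r, ((bb (ℓ+m)):ℝ) * b ^ (-((m:ℤ)+1)) := by
      have hz2 : blockVal b q2 (fun m => bb (ℓ+(r+m))) = 0 := by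
        apply Finset.sum_eq_zero
        intro m hm
        have hm' := Finset.mem_range.1 hm
        have : bb (ℓ+(r+m)) = 0 := hzero _ (by omega) (by omega)
        simp [this]
      rw [show blockVal b (n-ℓ) (fun m => bb (ℓ+m)) = blockVal b (r+q2) (fun m => bb (ℓ+m)) by rw [hsplit],
        blockVal_split hbne, hz2]
      simp
    have h2 : (∑ m ∈ Finset.range r, ((bb (ℓ+m)):ℝ) * b ^ (-((m:ℤ)+1)))
        = (∑ m ∈ Finset.range r, ((c m):ℝ) * b ^ (-((m:ℤ)+1))) + b ^ (-(r:ℤ)) := by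
      rw [sum_single_diff (show p - ℓ < r by omega)
        (fun m => ((bb (ℓ+m)):ℝ) * b ^ (-((m:ℤ)+1)))
        (fun m => ((c m):ℝ) * b ^ (-((m:ℤ)+1))) ?_]
      · have hpl : ℓ + (p - ℓ) = p := by omega
        have hcp : a p = c (p - ℓ) := by
          have := hall (p - ℓ) (by omega)
          rwa [hpl] at this
        have hpe : b ^ (-((((p-ℓ):ℕ):ℤ) + 1)) = b ^ (-(r:ℤ)) := by
          congr 1 <;> omega
        simp only [hpl]
        rw [hbbp, hcp]
        push_cast
        rw [hpe]
        ring
      · intro m hm hne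
        have h3 : ℓ + m < p := by omega
        have h4 : bb (ℓ + m) = c m := by
          rw [← hpagree _ h3]
          exact hall m (by omega)
        simp only [h4]
    have h3 := c_prefix_ge hb hc r
    have h4 := hSb ℓ hℓn
    have h5 : blockVal b r c = ∑ m ∈ Finset.range r, ((c m):ℝ) * b ^ (-((m:ℤ)+1)) := rfl
    rw [h1, h2] at h4
    rw [h5] at h3
    linarith
  exact ⟨p, hpn2, hbbp_ne, hzero, hpagree, hap, hsuffix, hmax⟩
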